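/- arXiv:0803.1266 — 4 statements merged into one kernel-verified Lean document; each statement's English description precedes it below -/
import Mathlib

section
/- Let ρ be a probability measure on [0,∞) with ρ({0}) < 1 (equivalently ρ((0,∞)) > 0). Then the sequence of positive measures ν_n := ρ + ρ*ρ + ... + ρ^{*n} (sums of convolution powers) converges in the vague topology to a translation bounded positive measure ν on ℝ; in particular, there exist constants C₁, C₂ such that ν([b, b+x)) ≤ 1 + C₁ + C₂·x for all b ≥ 0 and x > 0. -/
open MeasureTheory Filter Topology
open scoped NNReal ENNReal

/-- Convolution of two measures on `ℝ`. -/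
noncomputable def mconv (μ ν : Measure ℝ) : Measure ℝ :=
  (μ.prod ν).map (fun p : ℝ × ℝ => p.1 + p.2)

/-- `convPow ρ n` is the `n`-fold convolution power `ρ^{*n}` (with `ρ^{*0} = δ₀`). -/
noncomputable def convPow (ρ : Measure ℝ) : ℕ → Measure ℝ
  | 0 => Measure.dirac 0
  | n + 1 => mconv (convPow ρ n) ρ

/-- The partial sums `ν_n = ρ + ρ*ρ + ⋯ + ρ^{*n}`. -/
noncomputable def nuPartial (ρ : Measure ℝ) (n : ℕ) : Measure ℝ :=
  ∑ k ∈ Finset.range n, convPow ρ (k + 1)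

open Set

lemma madd : Measurable fun p : ℝ × ℝ => p.1 + p.2 := measurable_add

lemma mconv_apply (μ ν : Measure ℝ) [SFinite ν] {A : Set ℝ} (hA : MeasurableSet A) :
    mconv μ ν A = ∫⁻ x, ν {y | x + y ∈ A} ∂μ := by
  rw [mconv, Measure.map_apply madd hA, Measure.prod_apply (madd hA)]
  rfl

instance mconv_prob (μ ν : Measure ℝ) [IsProbabilityMeasure μ] [IsProbabilityMeasure ν] :
    IsProbabilityMeasure (mconv μ ν) := by
  constructor
  rw [mconv, Measure.map_apply madd MeasurableSet.univ]
  simp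

instance convPow_prob (ρ : Measure ℝ) [IsProbabilityMeasure ρ] (n : ℕ) :
    IsProbabilityMeasure (convPow ρ n) := by
  induction n with
  | zero => exact ⟨by simp [convPow]⟩
  | succ n ih => rw [convPow]; infer_instance

variable (ρ : Measure ℝ) [IsProbabilityMeasure ρ] (hsupp : ρ (Set.Iio 0) = 0)

include hsupp in
lemma convPow_supp (n : ℕ) : convPow ρ n (Iio 0) = 0 := by
  induction n with
  | zero => simp [convPow, Measure.dirac_apply' _ measurableSet_Iio]
  | succ n ih =>
    rw [convPow, mconv_apply _ _ measurableSet_Iio]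
    rw [← lintegral_zero (μ := convPow ρ n)]
    apply lintegral_congr_ae
    filter_upwards [(measure_eq_zero_iff_ae_notMem.mp ih)] with x hx
    apply measure_mono_null (t := Iio 0) _ hsupp
    intro y hy
    simp only [mem_setOf_eq, mem_Iio] at *
    try push_neg at hx
    linarith

include hsupp in
lemma convPow_supp' (n : ℕ) {t : ℝ} (ht : t ≤ 0) : convPow ρ n (Iio t) = 0 :=
  measure_mono_null (Iio_subset_Iio ht) (convPow_supp ρ hsupp n)

include hsupp in
lemma convPow_Ico_nonpos (n : ℕ) {a : ℝ} (ha : a ≤ 0) :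
    convPow ρ n (Ico a (a + 1)) ≤ convPow ρ n (Ico 0 1) := by
  calc convPow ρ n (Ico a (a + 1)) ≤ convPow ρ n (Ico 0 1 ∪ Iio 0) := by
        apply measure_mono
        intro z hz
        rcases lt_or_ge z 0 with h | h
        · exact Or.inr h
        · exact Or.inl ⟨h, by cases hz with | intro h1 h2 => linarith⟩
    _ ≤ convPow ρ n (Ico 0 1) + convPow ρ n (Iio 0) := measure_union_le _ _
    _ = convPow ρ n (Ico 0 1) := by rw [convPow_supp ρ hsupp n, add_zero]

include hsupp in
lemma convPow_Iio_antitone (n : ℕ) (t : ℝ) :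
    convPow ρ (n + 1) (Iio t) ≤ convPow ρ n (Iio t) := by
  rw [convPow, mconv_apply _ _ measurableSet_Iio]
  calc ∫⁻ x, ρ {y | x + y ∈ Iio t} ∂(convPow ρ n)
      ≤ ∫⁻ x, (Iio t).indicator (fun _ => 1) x ∂(convPow ρ n) := by
        apply lintegral_mono
        intro x
        rcases lt_or_ge x t with h | h
        · rw [indicator_of_mem (by simpa using h)]
          exact prob_le_one
        · rw [indicator_of_notMem (by simpa using h)]
          simp only [mem_Iio]
          rw [show ({y | x + y < t} : Set ℝ) = Iio (t - x) by ext y; simp only [mem_setOf_eq, mem_Iio]; constructor <;> intro <;> linarith]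
          rw [measure_mono_null (Iio_subset_Iio (by linarith : t - x ≤ 0)) hsupp]
    _ = convPow ρ n (Iio t) := by
        rw [lintegral_indicator_const measurableSet_Iio, one_mul]

lemma meas_Iio_sub (μ : Measure ℝ) (t : ℝ) : Measurable fun y : ℝ => μ (Iio (t - y)) := by
  have h1 : Monotone fun s : ℝ => μ (Iio s) := fun a b hab => measure_mono (Iio_subset_Iio hab)
  exact h1.measurable.comp (measurable_const.sub measurable_id)

lemma mconv_apply_symm (μ ν : Measure ℝ) [SFinite μ] [SFinite ν] {A : Set ℝ} (hA : MeasurableSet A) :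
    mconv μ ν A = ∫⁻ y, μ {x | x + y ∈ A} ∂ν := by
  rw [mconv, Measure.map_apply madd hA, Measure.prod_apply_symm (madd hA)]
  rfl

lemma mconv_comm (μ ν : Measure ℝ) [SFinite μ] [SFinite ν] : mconv μ ν = mconv ν μ := by
  rw [mconv, mconv, ← Measure.prod_swap, Measure.map_map madd measurable_swap]
  congr 1
  ext p
  exact add_comm _ _

lemma convPow_succ' (n : ℕ) : convPow ρ (n + 1) = mconv ρ (convPow ρ n) := by
  rw [convPow, mconv_comm]

lemma convPow_one : convPow ρ 1 = ρ := by
  ext A hA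
  rw [convPow, mconv_apply_symm _ _ hA]
  have : ∀ y : ℝ, Measure.dirac (0:ℝ) {x | x + y ∈ A} = A.indicator (fun _ => 1) y := by
    intro y
    have hm : MeasurableSet {x : ℝ | x + y ∈ A} := measurable_add_const y hA
    rw [Measure.dirac_apply' _ hm]
    by_cases hy : y ∈ A <;> simp [Set.indicator, hy]
  simp only [convPow]
  rw [lintegral_congr this, lintegral_indicator_const hA, one_mul]

lemma step_eq (j : ℕ) (t : ℝ) :
    ∫⁻ y, convPow ρ j (Iio (t - y)) ∂ρ = convPow ρ (j + 1) (Iio t) := by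
  rw [convPow_succ', mconv_apply _ _ measurableSet_Iio]
  apply lintegral_congr
  intro y
  congr 1
  ext x
  simp only [mem_setOf_eq, mem_Iio]
  constructor <;> intro <;> linarith

include hsupp in
lemma diff_int (j : ℕ) (t : ℝ) :
    ∫⁻ y, (convPow ρ j (Iio (t - y)) - convPow ρ (j+1) (Iio (t - y))) ∂ρ ≤
      convPow ρ (j+1) (Iio t) - convPow ρ (j+2) (Iio t) := by
  apply ENNReal.le_sub_of_add_le_right (measure_ne_top _ _)
  rw [← step_eq ρ j t, ← step_eq ρ (j+1) t]
  rw [← lintegral_add_right _ (meas_Iio_sub _ t)]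
  apply lintegral_mono
  intro y
  simp only []
  rw [tsub_add_cancel_of_le (convPow_Iio_antitone ρ hsupp j (t - y))]

include hsupp in
lemma key : ∀ n : ℕ, ∀ t : ℝ, 0 < t →
    convPow ρ n (Ico t (t + 1)) ≤ ∑ k ∈ Finset.range n,
      (convPow ρ k (Iio t) - convPow ρ (k + 1) (Iio t)) * convPow ρ (n - 1 - k) (Ico 0 1) := by
  intro n
  induction n with
  | zero =>
    intro t ht
    have hm : MeasurableSet (Ico t (t + 1)) := measurableSet_Ico
    simp only [convPow, Measure.dirac_apply' _ hm, Finset.range_zero, Finset.sum_empty]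
    rw [indicator_of_notMem (by simp [mem_Ico]; intro h; linarith)]
  | succ n IH =>
    intro t ht
    rw [convPow_succ', mconv_apply _ _ measurableSet_Ico]
    have hset : ∀ y : ℝ, {x | y + x ∈ Ico t (t + 1)} = Ico (t - y) ((t - y) + 1) := by
      intro y; ext x; simp only [mem_setOf_eq, mem_Ico]; constructor <;> intro ⟨h1, h2⟩ <;>
        constructor <;> linarith
    have hrw : ∫⁻ y, convPow ρ n {x | y + x ∈ Ico t (t + 1)} ∂ρ
        = ∫⁻ y, convPow ρ n (Ico (t - y) ((t - y) + 1)) ∂ρ :=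
      lintegral_congr fun y => by rw [hset y]
    rw [hrw]
    set M : ℕ → ℝ≥0∞ := fun m => convPow ρ m (Ico 0 1) with hM
    set H : ℝ → ℝ≥0∞ := fun y => ∑ k ∈ Finset.range n,
      (convPow ρ k (Iio (t - y)) - convPow ρ (k + 1) (Iio (t - y))) * M (n - 1 - k) with hH
    have hHmeas : Measurable H :=
      Finset.measurable_sum _ fun k _ => ((meas_Iio_sub _ t).sub (meas_Iio_sub _ t)).mul_const _
    have hpt : ∀ y : ℝ, convPow ρ n (Ico (t - y) ((t - y) + 1)) ≤
        (Iio t).indicator H y + (Iio t)ᶜ.indicator (fun _ => M n) y := by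
      intro y
      rcases lt_or_ge y t with h | h
      · rw [indicator_of_mem (by simpa using h), indicator_of_notMem (by simpa using h), add_zero]
        exact IH (t - y) (by linarith)
      · rw [indicator_of_notMem (by simpa using h),
          indicator_of_mem (by simpa using h), zero_add]
        exact convPow_Ico_nonpos ρ hsupp n (by linarith)
    calc ∫⁻ y, convPow ρ n (Ico (t - y) ((t - y) + 1)) ∂ρ
        ≤ ∫⁻ y, ((Iio t).indicator H y + (Iio t)ᶜ.indicator (fun _ => M n) y) ∂ρ :=
          lintegral_mono hpt
      _ = ∫⁻ y, (Iio t).indicator H y ∂ρ + ∫⁻ y, (Iio t)ᶜ.indicator (fun _ => M n) y ∂ρ :=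
          lintegral_add_right _ (measurable_const.indicator measurableSet_Iio.compl)
      _ ≤ (∑ k ∈ Finset.range n,
            (convPow ρ (k + 1) (Iio t) - convPow ρ (k + 2) (Iio t)) * M (n - 1 - k))
          + (convPow ρ 0 (Iio t) - convPow ρ 1 (Iio t)) * M n := by
          gcongr
          · -- first integral
            rw [lintegral_indicator measurableSet_Iio, hH]; beta_reduce
            rw [lintegral_finset_sum _ fun k _ => by exact
              ((meas_Iio_sub _ t).sub (meas_Iio_sub _ t)).mul_const _]
            apply Finset.sum_le_sum
            intro k _
            rw [lintegral_mul_const _ (by exact (meas_Iio_sub _ t).sub (meas_Iio_sub _ t))]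
            gcongr
            calc ∫⁻ y in Iio t, (convPow ρ k (Iio (t - y)) - convPow ρ (k + 1) (Iio (t - y))) ∂ρ
                ≤ ∫⁻ y, (convPow ρ k (Iio (t - y)) - convPow ρ (k + 1) (Iio (t - y))) ∂ρ :=
                  lintegral_mono' Measure.restrict_le_self le_rfl
              _ ≤ convPow ρ (k + 1) (Iio t) - convPow ρ (k + 2) (Iio t) := diff_int ρ hsupp k t
          · -- second integral
            rw [lintegral_indicator_const measurableSet_Iio.compl]
            have h0 : convPow ρ 0 (Iio t) = 1 := by
              simp [convPow, Measure.dirac_apply' _ measurableSet_Iio, indicator_of_mem,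
                mem_Iio, ht]
            have h1 : ρ (Iio t)ᶜ = 1 - ρ (Iio t) := prob_compl_eq_one_sub measurableSet_Iio
            rw [h1, h0, convPow_one, mul_comm]
      _ = ∑ k ∈ Finset.range (n + 1),
            (convPow ρ k (Iio t) - convPow ρ (k + 1) (Iio t)) * convPow ρ (n + 1 - 1 - k) (Ico 0 1) := by
          rw [Finset.sum_range_succ']
          congr 1
          · apply Finset.sum_congr rfl
            intro k _
            have : n + 1 - 1 - (k + 1) = n - 1 - k := by omega
            rw [this]

noncomputable def E (z : ℝ) : ℝ≥0∞ := ENNReal.ofReal (Real.exp (-z))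

lemma E_meas : Measurable E :=
  ENNReal.measurable_ofReal.comp (Real.continuous_exp.measurable.comp measurable_neg)

lemma lap_mconv (μ ν : Measure ℝ) [SFinite μ] [SFinite ν] :
    ∫⁻ z, E z ∂(mconv μ ν) = (∫⁻ z, E z ∂μ) * (∫⁻ z, E z ∂ν) := by
  rw [mconv, lintegral_map E_meas madd]
  have hfm : Measurable (fun a : ℝ × ℝ => E (a.1 + a.2)) := E_meas.comp madd
  rw [lintegral_prod _ hfm.aemeasurable]
  have : ∀ x y : ℝ, E (x + y) = E x * E y := by
    intro x y
    simp only [E, ← ENNReal.ofReal_mul (Real.exp_nonneg _), ← Real.exp_add]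
    ring_nf
  calc ∫⁻ x, ∫⁻ y, E (x + y) ∂ν ∂μ = ∫⁻ x, ∫⁻ y, E x * E y ∂ν ∂μ := by
        apply lintegral_congr; intro x; apply lintegral_congr; intro y; rw [this]
    _ = ∫⁻ x, E x * ∫⁻ y, E y ∂ν ∂μ := by
        apply lintegral_congr; intro x; rw [lintegral_const_mul _ E_meas]
    _ = (∫⁻ x, E x ∂μ) * ∫⁻ y, E y ∂ν := lintegral_mul_const _ E_meas

lemma lap_convPow (n : ℕ) : ∫⁻ z, E z ∂(convPow ρ n) = (∫⁻ z, E z ∂ρ) ^ n := by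
  induction n with
  | zero =>
    rw [convPow, lintegral_dirac' _ E_meas]
    simp [E]
  | succ n ih =>
    rw [convPow, lap_mconv, ih, pow_succ]

lemma E_le_one {x : ℝ} (hx : 0 ≤ x) : E x ≤ 1 := by
  simp only [E]
  rw [← ENNReal.ofReal_one]
  exact ENNReal.ofReal_le_ofReal (Real.exp_le_one_iff.mpr (by linarith))

include hsupp in
lemma phi_lt_one (hzero : ρ {0} < 1) : ∫⁻ z, E z ∂ρ < 1 := by
  -- find a > 0 with ρ (Ici a) > 0
  have hIoi : ρ (Ioi 0) ≠ 0 := by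
    intro h0
    have : (1:ℝ≥0∞) ≤ ρ {0} := by
      have huniv : (univ : Set ℝ) ⊆ Iio 0 ∪ ({0} ∪ Ioi 0) := by
        intro x _
        rcases lt_trichotomy x 0 with h | h | h
        · exact Or.inl h
        · exact Or.inr (Or.inl h)
        · exact Or.inr (Or.inr h)
      calc (1:ℝ≥0∞) = ρ univ := (measure_univ).symm
        _ ≤ ρ (Iio 0) + (ρ {0} + ρ (Ioi 0)) :=
          le_trans (measure_mono huniv) (le_trans (measure_union_le _ _)
            (by gcongr; exact measure_union_le _ _))
        _ = ρ {0} := by rw [hsupp, h0, zero_add, add_zero]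

    exact absurd hzero (not_lt.mpr this)
  obtain ⟨a, ha, hpa⟩ : ∃ a : ℝ, 0 < a ∧ ρ (Ici a) ≠ 0 := by
    by_contra hcon
    push_neg at hcon
    apply hIoi
    have : Ioi (0:ℝ) ⊆ ⋃ n : ℕ, Ici (1 / ((n:ℝ) + 1)) := by
      intro x hx
      obtain ⟨n, hn⟩ := exists_nat_one_div_lt (mem_Ioi.mp hx)
      exact mem_iUnion.mpr ⟨n, le_of_lt hn⟩
    refine measure_mono_null this (measure_iUnion_null fun n => ?_)
    exact hcon _ (by positivity)
  set p := ρ (Ici a) with hp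
  have hp1 : p ≤ 1 := prob_le_one
  have hptop : p ≠ ⊤ := measure_ne_top _ _
  have hsplit : ∫⁻ z, E z ∂ρ = (∫⁻ z in Ici a, E z ∂ρ) + ∫⁻ z in (Ici a)ᶜ, E z ∂ρ :=
    (lintegral_add_compl _ measurableSet_Ici).symm
  have h1 : ∫⁻ z in Ici a, E z ∂ρ ≤ ENNReal.ofReal (Real.exp (-a)) * p := by
    calc ∫⁻ z in Ici a, E z ∂ρ ≤ ∫⁻ _ in Ici a, ENNReal.ofReal (Real.exp (-a)) ∂ρ := by
          apply setLIntegral_mono measurable_const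
          intro x hx
          exact ENNReal.ofReal_le_ofReal (Real.exp_le_exp.mpr (by simp at hx ⊢; linarith))
      _ = ENNReal.ofReal (Real.exp (-a)) * p := by rw [setLIntegral_const]
  have h2 : ∫⁻ z in (Ici a)ᶜ, E z ∂ρ ≤ 1 - p := by
    have hsub : (Ici a)ᶜ ⊆ Ico 0 a ∪ Iio 0 := by
      intro x hx
      simp only [mem_compl_iff, mem_Ici, not_le] at hx
      rcases le_or_gt 0 x with h | h
      · exact Or.inl ⟨h, hx⟩
      · exact Or.inr h
    have e1 : ∫⁻ z in Ico 0 a, E z ∂ρ ≤ ρ (Ico 0 a) := by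
      rw [← setLIntegral_one (Ico 0 a)]
      exact setLIntegral_mono measurable_const fun x hx => E_le_one hx.1
    have e0 : ∫⁻ z in Iio 0, E z ∂ρ = 0 := setLIntegral_measure_zero _ _ hsupp
    calc ∫⁻ z in (Ici a)ᶜ, E z ∂ρ ≤ ∫⁻ z in Ico 0 a ∪ Iio 0, E z ∂ρ := lintegral_mono_set hsub
      _ ≤ (∫⁻ z in Ico 0 a, E z ∂ρ) + ∫⁻ z in Iio 0, E z ∂ρ := lintegral_union_le _ _ _
      _ ≤ ρ (Ico 0 a) + 0 := add_le_add e1 (le_of_eq e0)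
      _ = ρ (Ico 0 a) := add_zero _
      _ ≤ ρ (Ici a)ᶜ := measure_mono (fun x hx => by
            simp only [mem_compl_iff, mem_Ici, not_le]; exact hx.2)
      _ = 1 - p := prob_compl_eq_one_sub measurableSet_Ici
  calc ∫⁻ z, E z ∂ρ ≤ ENNReal.ofReal (Real.exp (-a)) * p + (1 - p) := by
        rw [hsplit]; exact add_le_add h1 h2
    _ < 1 * p + (1 - p) := by
        refine ENNReal.add_lt_add_right ?_ ?_
        · simp only [ne_eq, ENNReal.sub_eq_top_iff]
          exact fun h => absurd h.1 ENNReal.one_ne_top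
        · apply ENNReal.mul_lt_mul_left hpa hptop
          exact ENNReal.ofReal_lt_one.mpr (Real.exp_lt_one_iff.mpr (by linarith))
    _ = p + (1 - p) := by rw [one_mul]
    _ = 1 := by
        rw [add_comm, tsub_add_cancel_of_le hp1]

include hsupp in
lemma Mtot_lt_top (hzero : ρ {0} < 1) : ∑' n, convPow ρ n (Ico 0 1) < ⊤ := by
  set φ := ∫⁻ z, E z ∂ρ with hφ
  have hφ1 : φ < 1 := phi_lt_one ρ hsupp hzero
  have hMn : ∀ n, convPow ρ n (Ico 0 1) ≤ ENNReal.ofReal (Real.exp 1) * φ ^ n := by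
    intro n
    rw [← lintegral_indicator_one (μ := convPow ρ n) measurableSet_Ico]
    calc ∫⁻ z, (Ico (0:ℝ) 1).indicator 1 z ∂(convPow ρ n)
        ≤ ∫⁻ z, ENNReal.ofReal (Real.exp 1) * E z ∂(convPow ρ n) := by
          apply lintegral_mono
          intro z
          by_cases hz : z ∈ Ico (0:ℝ) 1
          · rw [indicator_of_mem hz]
            simp only [E, ← ENNReal.ofReal_mul (Real.exp_nonneg _), ← Real.exp_add, Pi.one_apply]
            rw [show (1:ℝ≥0∞) = ENNReal.ofReal 1 by simp]
            refine ENNReal.ofReal_le_ofReal (Real.one_le_exp ?_)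
            simp only [mem_Ico] at hz
            linarith [hz.2]
          · rw [indicator_of_notMem hz]; exact zero_le
      _ = ENNReal.ofReal (Real.exp 1) * φ ^ n := by
          rw [lintegral_const_mul _ E_meas, lap_convPow]
  calc ∑' n, convPow ρ n (Ico 0 1) ≤ ∑' n, ENNReal.ofReal (Real.exp 1) * φ ^ n :=
        ENNReal.tsum_le_tsum hMn
    _ = ENNReal.ofReal (Real.exp 1) * (1 - φ)⁻¹ := by
        rw [ENNReal.tsum_mul_left, ENNReal.tsum_geometric]
    _ < ⊤ :=
        ENNReal.mul_lt_top ENNReal.ofReal_lt_top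
          (ENNReal.inv_lt_top.mpr (tsub_pos_iff_lt.mpr hφ1))

lemma tele (a : ℕ → ℝ≥0∞) (hd : ∀ k, a (k + 1) ≤ a k) (N : ℕ) :
    ∑ k ∈ Finset.range N, (a k - a (k + 1)) = a 0 - a N := by
  induction N with
  | zero => simp
  | succ N ih =>
    have haN : a N ≤ a 0 := antitone_nat_of_succ_le hd (Nat.zero_le N)
    rw [Finset.sum_range_succ, ih, tsub_add_tsub_cancel haN (hd N)]

lemma triangle (f g : ℕ → ℝ≥0∞) (N : ℕ) :
    ∑ n ∈ Finset.range N, ∑ k ∈ Finset.range (n + 1), f k * g (n - k)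
      ≤ (∑ k ∈ Finset.range N, f k) * (∑ m ∈ Finset.range N, g m) := by
  have h1 : ∀ n, ∑ k ∈ Finset.range (n + 1), f k * g (n - k)
      = ∑ p ∈ Finset.HasAntidiagonal.antidiagonal n, f p.1 * g p.2 := fun n =>
    (Finset.Nat.sum_antidiagonal_eq_sum_range_succ_mk (fun p => f p.1 * g p.2) n).symm
  have hdisj : (↑(Finset.range N) : Set ℕ).PairwiseDisjoint Finset.HasAntidiagonal.antidiagonal := by
    intro m _ n _ hmn
    simp only [Function.onFun]
    rw [Finset.disjoint_left]
    intro p hpm hpn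
    rw [Finset.HasAntidiagonal.mem_antidiagonal] at hpm hpn
    exact hmn (hpm ▸ hpn ▸ rfl)
  have hsub : (Finset.range N).biUnion Finset.HasAntidiagonal.antidiagonal ⊆
      Finset.range N ×ˢ Finset.range N := by
    intro p hp
    rw [Finset.mem_biUnion] at hp
    obtain ⟨n, hn, hpn⟩ := hp
    rw [Finset.HasAntidiagonal.mem_antidiagonal] at hpn
    rw [Finset.mem_range] at hn
    rw [Finset.mem_product, Finset.mem_range, Finset.mem_range]
    omega
  calc ∑ n ∈ Finset.range N, ∑ k ∈ Finset.range (n + 1), f k * g (n - k)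
      = ∑ n ∈ Finset.range N, ∑ p ∈ Finset.HasAntidiagonal.antidiagonal n, f p.1 * g p.2 := by
        simp_rw [h1]
    _ = ∑ p ∈ (Finset.range N).biUnion Finset.HasAntidiagonal.antidiagonal, f p.1 * g p.2 :=
        (Finset.sum_biUnion hdisj).symm
    _ ≤ ∑ p ∈ Finset.range N ×ˢ Finset.range N, f p.1 * g p.2 :=
        Finset.sum_le_sum_of_subset hsub
    _ = (∑ k ∈ Finset.range N, f k) * (∑ m ∈ Finset.range N, g m) := by
        rw [Finset.sum_mul_sum, Finset.sum_product]

include hsupp in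
lemma interval_bound (t : ℝ) :
    Measure.sum (fun k : ℕ => convPow ρ (k + 1)) (Ico t (t + 1))
      ≤ ∑' n, convPow ρ n (Ico 0 1) := by
  rw [Measure.sum_apply _ measurableSet_Ico]
  rcases le_or_gt t 0 with ht | ht
  · calc ∑' n : ℕ, convPow ρ (n + 1) (Ico t (t + 1))
        ≤ ∑' n : ℕ, convPow ρ (n + 1) (Ico 0 1) :=
          ENNReal.tsum_le_tsum fun n => convPow_Ico_nonpos ρ hsupp (n + 1) ht
      _ ≤ ∑' n, convPow ρ n (Ico 0 1) :=
          ENNReal.tsum_comp_le_tsum_of_injective (add_left_injective 1) _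
  · apply ENNReal.tsum_le_of_sum_range_le
    intro N
    calc ∑ n ∈ Finset.range N, convPow ρ (n + 1) (Ico t (t + 1))
        ≤ ∑ n ∈ Finset.range N, ∑ k ∈ Finset.range (n + 1),
            (convPow ρ k (Iio t) - convPow ρ (k + 1) (Iio t)) * convPow ρ (n - k) (Ico 0 1) := by
          apply Finset.sum_le_sum
          intro n _
          have h := key ρ hsupp (n + 1) t ht
          simpa using h
      _ ≤ (∑ k ∈ Finset.range N, (convPow ρ k (Iio t) - convPow ρ (k + 1) (Iio t)))
            * (∑ m ∈ Finset.range N, convPow ρ m (Ico 0 1)) := triangle _ _ N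
      _ ≤ 1 * ∑' n, convPow ρ n (Ico 0 1) := by
          gcongr
          · rw [tele _ (fun k => convPow_Iio_antitone ρ hsupp k t)]
            exact le_trans (tsub_le_self) prob_le_one
          · exact ENNReal.sum_le_tsum _
      _ = ∑' n, convPow ρ n (Ico 0 1) := one_mul _

include hsupp in
lemma cover_bound (m : ℕ) (s : ℝ) :
    Measure.sum (fun k : ℕ => convPow ρ (k + 1)) (Ico s (s + m))
      ≤ m * ∑' n, convPow ρ n (Ico 0 1) := by
  induction m generalizing s with
  | zero => simp
  | succ m ih =>
    have hsub : Ico s (s + ((m : ℕ) + 1 : ℕ)) ⊆ Ico s (s + m) ∪ Ico (s + m) ((s + m) + 1) := by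
      intro z hz
      rw [mem_Ico] at hz
      push_cast at hz
      rcases lt_or_ge z (s + m) with h | h
      · exact Or.inl ⟨hz.1, h⟩
      · exact Or.inr ⟨h, by linarith [hz.2]⟩
    calc Measure.sum (fun k : ℕ => convPow ρ (k + 1)) (Ico s (s + ((m : ℕ) + 1 : ℕ)))
        ≤ Measure.sum (fun k : ℕ => convPow ρ (k + 1)) (Ico s (s + m))
          + Measure.sum (fun k : ℕ => convPow ρ (k + 1)) (Ico (s + m) ((s + m) + 1)) :=
          le_trans (measure_mono hsub) (measure_union_le _ _)
      _ ≤ m * (∑' n, convPow ρ n (Ico 0 1)) + ∑' n, convPow ρ n (Ico 0 1) :=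
          add_le_add (ih s) (interval_bound ρ hsupp (s + m))
      _ = ((m : ℕ) + 1 : ℕ) * ∑' n, convPow ρ n (Ico 0 1) := by
          push_cast
          ring

include hsupp in
theorem renewal_measure_convergence'
    (hzero : ρ {0} < 1) :
    ∃ ν : Measure ℝ,
      (∀ f : ℝ → ℝ, Continuous f → HasCompactSupport f →
        Tendsto (fun n => ∫ x, f x ∂(∑ k ∈ Finset.range n, convPow ρ (k + 1))) atTop
          (𝓝 (∫ x, f x ∂ν))) ∧
      (∀ K : Set ℝ, IsCompact K → ∃ C : ℝ≥0, ∀ t : ℝ, ν ((fun x => t + x) '' K) ≤ C) ∧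
      (∃ C₁ C₂ : ℝ≥0, ∀ b x : ℝ, 0 ≤ b → 0 < x →
        ν (Set.Ico b (b + x)) ≤ 1 + C₁ + C₂ * ENNReal.ofReal x) := by
  classical
  have hBtop : (∑' n, convPow ρ n (Ico 0 1)) ≠ ⊤ := (Mtot_lt_top ρ hsupp hzero).ne
  refine ⟨Measure.sum (fun k : ℕ => convPow ρ (k + 1)), ?_, ?_, ?_⟩
  · -- vague convergence
    intro f hf hfc
    haveI hfin : IsFiniteMeasureOnCompacts (Measure.sum (fun k : ℕ => convPow ρ (k + 1))) := by
      constructor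
      intro K hK
      obtain ⟨R, hR⟩ := hK.isBounded.subset_closedBall 0
      have hsub : K ⊆ Ico (-R) ((-R) + ((⌊2 * R⌋₊ + 1 : ℕ) : ℝ)) := by
        intro x hx
        have hxR : |x| ≤ R := by simpa [Real.dist_0_eq_abs] using hR hx
        rw [abs_le] at hxR
        have h2R : 2 * R < ((⌊2 * R⌋₊ + 1 : ℕ) : ℝ) := by
          push_cast
          exact Nat.lt_floor_add_one _
        constructor
        · linarith [hxR.1]
        · push_cast at h2R ⊢
          linarith [hxR.2]
      exact lt_of_le_of_lt (le_trans (measure_mono hsub) (cover_bound ρ hsupp _ _))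
        (ENNReal.mul_lt_top (ENNReal.natCast_lt_top _) hBtop.lt_top)
    have hint : Integrable f (Measure.sum (fun k : ℕ => convPow ρ (k + 1))) :=
      hf.integrable_of_hasCompactSupport hfc
    have hintk : ∀ k : ℕ, Integrable f (convPow ρ (k + 1)) := fun k =>
      hf.integrable_of_hasCompactSupport hfc
    have hpartial : ∀ n, ∫ x, f x ∂(∑ k ∈ Finset.range n, convPow ρ (k + 1))
        = ∑ k ∈ Finset.range n, ∫ x, f x ∂(convPow ρ (k + 1)) := fun n =>
      integral_finset_sum_measure (fun k _ => hintk k)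
    have hsum_eq : ∫ x, f x ∂(Measure.sum (fun k : ℕ => convPow ρ (k + 1)))
        = ∑' k, ∫ x, f x ∂(convPow ρ (k + 1)) := integral_sum_measure hint
    obtain ⟨Cb, hCb⟩ := hf.bounded_above_of_compact_support hfc
    have hSmeas : MeasurableSet (tsupport f) := (isClosed_tsupport f).measurableSet
    have hStop : ∑' k, convPow ρ (k + 1) (tsupport f) ≠ ⊤ := by
      have heq : ∑' k, convPow ρ (k + 1) (tsupport f)
          = Measure.sum (fun k : ℕ => convPow ρ (k + 1)) (tsupport f) :=
        (Measure.sum_apply _ hSmeas).symm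
      rw [heq]
      exact (IsCompact.measure_lt_top hfc).ne
    have hsummable : Summable (fun k => ∫ x, f x ∂(convPow ρ (k + 1))) := by
      apply Summable.of_norm_bounded (g := fun k => Cb * (convPow ρ (k + 1) (tsupport f)).toReal)
        ((ENNReal.summable_toReal hStop).mul_left Cb)
      intro k
      calc ‖∫ x, f x ∂(convPow ρ (k + 1))‖ ≤ ∫ x, ‖f x‖ ∂(convPow ρ (k + 1)) :=
            norm_integral_le_integral_norm f
        _ ≤ ∫ x, (tsupport f).indicator (fun _ => Cb) x ∂(convPow ρ (k + 1)) := by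
            apply integral_mono (hintk k).norm ((integrable_const Cb).indicator hSmeas)
            intro x
            by_cases hx : x ∈ tsupport f
            · rw [indicator_of_mem hx]; exact hCb x
            · simp only [indicator_of_notMem hx, image_eq_zero_of_notMem_tsupport hx, norm_zero]
              exact le_rfl
        _ = (convPow ρ (k + 1) (tsupport f)).toReal • Cb :=
            integral_indicator_const Cb hSmeas
        _ = Cb * (convPow ρ (k + 1) (tsupport f)).toReal := by
            rw [smul_eq_mul, mul_comm]
    have htend := hsummable.hasSum.tendsto_sum_nat
    rw [show (fun n => ∫ x, f x ∂(∑ k ∈ Finset.range n, convPow ρ (k + 1)))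
        = fun n => ∑ k ∈ Finset.range n, ∫ x, f x ∂(convPow ρ (k + 1)) from funext hpartial,
      hsum_eq]
    exact htend
  · -- translation boundedness
    intro K hK
    obtain ⟨R, hR⟩ := hK.isBounded.subset_closedBall 0
    refine ⟨((⌊2 * R⌋₊ + 1 : ℕ) * ∑' n, convPow ρ n (Ico 0 1)).toNNReal, ?_⟩
    intro t
    have hsub : (fun x => t + x) '' K ⊆ Ico (t - R) ((t - R) + ((⌊2 * R⌋₊ + 1 : ℕ) : ℝ)) := by
      rintro _ ⟨x, hx, rfl⟩
      have hxR : |x| ≤ R := by simpa [Real.dist_0_eq_abs] using hR hx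
      rw [abs_le] at hxR
      have h2R : 2 * R < ((⌊2 * R⌋₊ + 1 : ℕ) : ℝ) := by
        push_cast
        exact Nat.lt_floor_add_one _
      constructor
      · simp only [mem_Ico]
        linarith [hxR.1]
      · push_cast at h2R ⊢
        linarith [hxR.2]
    calc Measure.sum (fun k : ℕ => convPow ρ (k + 1)) ((fun x => t + x) '' K)
        ≤ (⌊2 * R⌋₊ + 1 : ℕ) * ∑' n, convPow ρ n (Ico 0 1) :=
          le_trans (measure_mono hsub) (cover_bound ρ hsupp _ _)
      _ = ↑((⌊2 * R⌋₊ + 1 : ℕ) * ∑' n, convPow ρ n (Ico 0 1)).toNNReal :=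
          (ENNReal.coe_toNNReal (ENNReal.mul_ne_top (ENNReal.natCast_ne_top _) hBtop)).symm
  · -- linear growth
    refine ⟨(∑' n, convPow ρ n (Ico 0 1)).toNNReal, (∑' n, convPow ρ n (Ico 0 1)).toNNReal, ?_⟩
    intro b x hb hx
    have hsub : Ico b (b + x) ⊆ Ico b (b + ((⌊x⌋₊ + 1 : ℕ) : ℝ)) := by
      apply Ico_subset_Ico_right
      have : x < ((⌊x⌋₊ + 1 : ℕ) : ℝ) := by push_cast; exact Nat.lt_floor_add_one x
      linarith
    have hfloor : ((⌊x⌋₊ : ℕ) : ℝ≥0∞) ≤ ENNReal.ofReal x := by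
      rw [← ENNReal.ofReal_natCast]
      exact ENNReal.ofReal_le_ofReal (Nat.floor_le hx.le)
    calc Measure.sum (fun k : ℕ => convPow ρ (k + 1)) (Ico b (b + x))
        ≤ (⌊x⌋₊ + 1 : ℕ) * ∑' n, convPow ρ n (Ico 0 1) :=
          le_trans (measure_mono hsub) (cover_bound ρ hsupp _ _)
      _ = ((⌊x⌋₊ : ℕ) : ℝ≥0∞) * (∑' n, convPow ρ n (Ico 0 1)) + ∑' n, convPow ρ n (Ico 0 1) := by
          push_cast
          ring
      _ ≤ ENNReal.ofReal x * (∑' n, convPow ρ n (Ico 0 1)) + ∑' n, convPow ρ n (Ico 0 1) := by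
          gcongr
      _ ≤ 1 + ↑(∑' n, convPow ρ n (Ico 0 1)).toNNReal
            + ↑(∑' n, convPow ρ n (Ico 0 1)).toNNReal * ENNReal.ofReal x := by
          rw [ENNReal.coe_toNNReal hBtop, mul_comm (ENNReal.ofReal x)]
          calc (∑' n, convPow ρ n (Ico 0 1)) * ENNReal.ofReal x + ∑' n, convPow ρ n (Ico 0 1)
              ≤ (∑' n, convPow ρ n (Ico 0 1)) * ENNReal.ofReal x
                + (1 + ∑' n, convPow ρ n (Ico 0 1)) := by
                gcongr
                exact le_add_self
            _ = 1 + (∑' n, convPow ρ n (Ico 0 1))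
                + (∑' n, convPow ρ n (Ico 0 1)) * ENNReal.ofReal x := by ring

theorem renewal_measure_convergence
    (ρ : Measure ℝ) [IsProbabilityMeasure ρ]
    (hsupp : ρ (Set.Iio 0) = 0) (hzero : ρ {0} < 1) :
    ∃ ν : Measure ℝ,
      (∀ f : ℝ → ℝ, Continuous f → HasCompactSupport f →
        Tendsto (fun n => ∫ x, f x ∂(nuPartial ρ n)) atTop (𝓝 (∫ x, f x ∂ν))) ∧
      (∀ K : Set ℝ, IsCompact K → ∃ C : ℝ≥0, ∀ t : ℝ, ν ((fun x => t + x) '' K) ≤ C) ∧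
      (∃ C₁ C₂ : ℝ≥0, ∀ b x : ℝ, 0 ≤ b → 0 < x →
        ν (Set.Ico b (b + x)) ≤ 1 + C₁ + C₂ * ENNReal.ofReal x) := by
  obtain ⟨ν, h1, h2, h3⟩ := renewal_measure_convergence' ρ hsupp hzero
  refine ⟨ν, fun f hf hfc => ?_, h2, h3⟩
  simpa [nuPartial] using h1 f hf hfc
end

section
/- Let X₁, X₂, ... be i.i.d. nonnegative real random variables with common distribution ρ satisfying ρ({0}) < 1. Then for every b ≥ 0 and x > 0, the expected number of partial sums S_n = X₁ + ... + X_n (n ≥ 1) falling in [b, b+x) satisfies ∑_{n=1}^∞ P(b ≤ S_n < b+x) ≤ 1 + ∑_{m=1}^∞ P(S_m < x). -/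
open MeasureTheory Filter Topology ProbabilityTheory
open scoped NNReal ENNReal

section RenewalAux

variable {Ω : Type*} [MeasureSpace Ω] [IsProbabilityMeasure (ℙ : Measure Ω)]
  {X : ℕ → Ω → ℝ}

lemma aux_meas_phi (S : Finset ℕ) :
    Measurable (fun v : {x // x ∈ S} → ℝ => ∑ i, v i) :=
  Finset.measurable_sum Finset.univ (fun i _ => measurable_pi_apply i)

lemma aux_indep_tuple_sum (hindep : iIndepFun X ℙ)
    (hmeas : ∀ i, Measurable (X i)) {S T : Finset ℕ} (hST : Disjoint S T) :
    IndepFun (fun ω (i : S) => X i ω) (fun ω => ∑ i ∈ T, X i ω) ℙ := by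
  have h := hindep.indepFun_finset S T hST hmeas
  have h2 := h.comp measurable_id (aux_meas_phi T)
  have e2 : ((fun v : {x // x ∈ T} → ℝ => ∑ i, v i) ∘ (fun a (i : T) => X i a))
      = fun ω => ∑ i ∈ T, X i ω := by
    funext ω
    simp only [Function.comp]
    exact Finset.sum_coe_sort T fun i => X i ω
  rwa [e2] at h2

lemma aux_indep_sum_sum (hindep : iIndepFun X ℙ)
    (hmeas : ∀ i, Measurable (X i)) {S T : Finset ℕ} (hST : Disjoint S T) :
    IndepFun (fun ω => ∑ i ∈ S, X i ω) (fun ω => ∑ i ∈ T, X i ω) ℙ := by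
  have h := hindep.indepFun_finset S T hST hmeas
  have h2 := h.comp (aux_meas_phi S) (aux_meas_phi T)
  have e : ∀ (U : Finset ℕ), ((fun v : {x // x ∈ U} → ℝ => ∑ i, v i) ∘ (fun a (i : U) => X i a))
      = fun ω => ∑ i ∈ U, X i ω := by
    intro U; funext ω
    simp only [Function.comp]
    exact Finset.sum_coe_sort U fun i => X i ω
  rwa [e S, e T] at h2

lemma aux_identDistrib_add {f g f' g' : Ω → ℝ}
    (hf : Measurable f) (hg : Measurable g) (hf' : Measurable f') (hg' : Measurable g')
    (hfg : IndepFun f g ℙ) (hfg' : IndepFun f' g' ℙ)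
    (h1 : IdentDistrib f f' ℙ ℙ) (h2 : IdentDistrib g g' ℙ ℙ) :
    IdentDistrib (fun ω => f ω + g ω) (fun ω => f' ω + g' ω) ℙ ℙ := by
  have hpair : IdentDistrib (fun ω => (f ω, g ω)) (fun ω => (f' ω, g' ω)) ℙ ℙ := by
    refine ⟨(hf.prodMk hg).aemeasurable, (hf'.prodMk hg').aemeasurable, ?_⟩
    rw [(indepFun_iff_map_prod_eq_prod_map_map hf.aemeasurable hg.aemeasurable).1 hfg,
      (indepFun_iff_map_prod_eq_prod_map_map hf'.aemeasurable hg'.aemeasurable).1 hfg',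
      h1.map_eq, h2.map_eq]
  exact hpair.comp measurable_add

lemma aux_ident_shift (hindep : iIndepFun X ℙ)
    (hmeas : ∀ i, Measurable (X i))
    (hident : ∀ i, Measure.map (X i) ℙ = Measure.map (X 0) ℙ) (m j : ℕ) :
    IdentDistrib (fun ω => ∑ i ∈ Finset.range (m + 1), X (j + i) ω)
      (fun ω => ∑ i ∈ Finset.range (m + 1), X i ω) ℙ ℙ := by
  induction m generalizing j with
  | zero =>
      simp only [zero_add, Finset.range_one, Finset.sum_singleton, Nat.add_zero, add_zero]
      exact ⟨(hmeas _).aemeasurable, (hmeas _).aemeasurable, by simp only [hident]⟩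
  | succ m ih =>
      have hsum_meas : ∀ (k : ℕ), Measurable (fun ω => ∑ i ∈ Finset.range (m + 1), X (k + i) ω) :=
        fun k => Finset.measurable_sum _ (fun i _ => hmeas (k + i))
      have himg : ∀ (k : ℕ), (fun ω => ∑ i ∈ Finset.range (m + 1), X (k + i) ω)
          = fun ω => ∑ i ∈ (Finset.range (m + 1)).image (k + ·), X i ω := by
        intro k; funext ω
        rw [Finset.sum_image (by intro a _ b _ h; dsimp only at h; omega)]
      have hindep1 : IndepFun (fun ω => ∑ i ∈ Finset.range (m + 1), X (j + i) ω)
          (X (j + (m + 1))) ℙ := by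
        rw [himg j]
        have h := aux_indep_sum_sum hindep hmeas
          (S := (Finset.range (m + 1)).image (j + ·)) (T := {j + (m + 1)})
          (by simp only [Finset.disjoint_singleton_right, Finset.mem_image, Finset.mem_range]
              rintro ⟨a, ha, h⟩; omega)
        simpa using h
      have hindep2 : IndepFun (fun ω => ∑ i ∈ Finset.range (m + 1), X (0 + i) ω)
          (X (0 + (m + 1))) ℙ := by
        rw [himg 0]
        have h := aux_indep_sum_sum hindep hmeas
          (S := (Finset.range (m + 1)).image (0 + ·)) (T := {0 + (m + 1)})
          (by simp only [Finset.disjoint_singleton_right, Finset.mem_image, Finset.mem_range]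
              rintro ⟨a, ha, h⟩; omega)
        simpa using h
      have key := aux_identDistrib_add (hsum_meas j) (hmeas _) (hsum_meas 0) (hmeas _)
        hindep1 hindep2 ((ih j).trans (ih 0).symm)
        ⟨(hmeas _).aemeasurable, (hmeas _).aemeasurable, by simp only [hident]⟩
      have e0 : ∀ k, (fun ω => ∑ i ∈ Finset.range (m + 1), X (k + i) ω + X (k + (m + 1)) ω)
          = fun ω => ∑ i ∈ Finset.range (m + 1 + 1), X (k + i) ω := by
        intro k; funext ω; exact (Finset.sum_range_succ (fun i => X (k + i) ω) (m + 1)).symm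
      rw [e0 j, e0 0] at key
      simpa using key

end RenewalAux

theorem renewal_interval_bound
    {Ω : Type*} [MeasureSpace Ω] [IsProbabilityMeasure (ℙ : Measure Ω)]
    (X : ℕ → Ω → ℝ)
    (hmeas : ∀ i, Measurable (X i))
    (hnonneg : ∀ i ω, 0 ≤ X i ω)
    (hindep : iIndepFun X ℙ)
    (hident : ∀ i, Measure.map (X i) ℙ = Measure.map (X 0) ℙ)
    (hzero : ℙ {ω | X 0 ω = 0} < 1) :
    ∀ b x : ℝ, 0 ≤ b → 0 < x →
      (∑' n : ℕ, ℙ {ω | (∑ i ∈ Finset.range (n + 1), X i ω) ∈ Set.Ico b (b + x)})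
        ≤ 1 + ∑' m : ℕ, ℙ {ω | (∑ i ∈ Finset.range (m + 1), X i ω) < x} := by
  classical
  intro b x hb hx
  set I : Set ℝ := Set.Ico b (b + x) with hIdef
  have hI : MeasurableSet I := measurableSet_Ico
  set S : ℕ → Ω → ℝ := fun n ω => ∑ i ∈ Finset.range (n + 1), X i ω with hSdef
  have hSmeas : ∀ n, Measurable (S n) := fun n => Finset.measurable_sum _ (fun i _ => hmeas i)
  show (∑' n : ℕ, ℙ {ω | S n ω ∈ I}) ≤ 1 + ∑' m : ℕ, ℙ {ω | S m ω < x}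
  set A : ℕ → Set Ω := fun k => {ω | S k ω ∈ I ∧ ∀ j < k, S j ω ∉ I} with hAdef
  have hAmeas : ∀ k, MeasurableSet (A k) := by
    intro k
    have hrw : A k = {ω | S k ω ∈ I} ∩ ⋂ j, ⋂ _ : j < k, {ω | S j ω ∈ I}ᶜ := by
      ext ω; simp [hAdef]
    rw [hrw]
    exact ((hSmeas k) hI).inter (MeasurableSet.iInter fun j =>
      MeasurableSet.iInter fun _ => ((hSmeas j) hI).compl)
  have hAdisj : Pairwise (Function.onFun Disjoint A) := by
    intro k l hkl
    rcases Nat.lt_or_ge k l with h | h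
    · exact Set.disjoint_left.2 fun ω hk hl => hl.2 k h hk.1
    · have hlk : l < k := lt_of_le_of_ne h (Ne.symm hkl)
      exact Set.disjoint_left.2 fun ω hk hl => hk.2 l hlk hl.1
  have hdecomp : ∀ n, ℙ {ω | S n ω ∈ I} = ∑' k, ℙ (A k ∩ {ω | S n ω ∈ I}) := by
    intro n
    show ℙ (S n ⁻¹' I) = ∑' k, ℙ (A k ∩ S n ⁻¹' I)
    rw [← measure_iUnion
      (fun k l hkl => (hAdisj hkl).mono Set.inter_subset_left Set.inter_subset_left)
      (fun k => (hAmeas k).inter ((hSmeas n) hI))]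
    congr 1
    apply Set.Subset.antisymm
    · intro ω h
      have hex : ∃ k, S k ω ∈ I := ⟨n, h⟩
      refine Set.mem_iUnion.2 ⟨Nat.find hex, Set.mem_inter ?_ h⟩
      show S (Nat.find hex) ω ∈ I ∧ ∀ j < Nat.find hex, S j ω ∉ I
      exact ⟨Nat.find_spec hex, fun j hj => Nat.find_min hex hj⟩
    · exact Set.iUnion_subset fun k => Set.inter_subset_right
  set C : ℝ≥0∞ := ∑' m : ℕ, ℙ {ω | S m ω < x} with hCdef
  have key : ∀ k, (∑' n, ℙ (A k ∩ {ω | S n ω ∈ I})) ≤ ℙ (A k) * (1 + C) := by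
    intro k
    set f : ℕ → ℝ≥0∞ := fun n => ℙ (A k ∩ {ω | S n ω ∈ I}) with hfdef
    have hvanish : ∀ i ∈ Finset.range k, f i = 0 := by
      intro i hi
      rw [Finset.mem_range] at hi
      have hempty : A k ∩ {ω | S i ω ∈ I} = ∅ := by
        ext ω
        simp only [Set.mem_inter_iff, Set.mem_empty_iff_false, iff_false, not_and]
        intro hA hS
        exact hA.2 i hi hS
      simp only [hfdef, hempty, measure_empty]
    have htail : ∀ i : ℕ, f (i + (k + 1)) ≤ ℙ (A k) * ℙ {ω | S i ω < x} := by
      intro i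
      set T : Ω → ℝ := fun ω => ∑ l ∈ Finset.Ico (k + 1) (i + (k + 1) + 1), X l ω with hTdef
      have hsplit : ∀ ω, S (i + (k + 1)) ω = S k ω + T ω := by
        intro ω
        show (∑ l ∈ Finset.range (i + (k + 1) + 1), X l ω)
          = (∑ l ∈ Finset.range (k + 1), X l ω) + T ω
        rw [hTdef, Finset.range_eq_Ico, Finset.range_eq_Ico]
        exact (Finset.sum_Ico_consecutive (fun l => X l ω) (m := 0) (n := k + 1) (k := i + (k + 1) + 1) (by omega) (by omega)).symm
      have hsub : A k ∩ {ω | S (i + (k + 1)) ω ∈ I} ⊆ A k ∩ T ⁻¹' (Set.Iio x) := by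
        rintro ω ⟨hA, hS⟩
        refine ⟨hA, ?_⟩
        obtain ⟨hA1, -⟩ := hA
        obtain ⟨hb1, -⟩ := hA1
        have h2 : S (i + (k + 1)) ω < b + x := hS.2
        have h3 := hsplit ω
        show T ω < x
        linarith
      have hdisj : Disjoint (Finset.range (k + 1)) (Finset.Ico (k + 1) (i + (k + 1) + 1)) := by
        simp only [Finset.disjoint_left, Finset.mem_range, Finset.mem_Ico]
        omega
      have hYT := aux_indep_tuple_sum hindep hmeas hdisj
      set F : ℕ → ({y // y ∈ Finset.range (k + 1)} → ℝ) → ℝ :=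
        fun j v => ∑ l ∈ Finset.range (j + 1),
          if h : l ∈ Finset.range (k + 1) then v ⟨l, h⟩ else 0 with hFdef
      have hFmeas : ∀ j, Measurable (F j) := by
        intro j
        apply Finset.measurable_sum
        intro l _
        by_cases h : l ∈ Finset.range (k + 1)
        · simpa [h] using measurable_pi_apply (⟨l, h⟩ : {y // y ∈ Finset.range (k + 1)})
        · simpa [h] using measurable_const (α := ({y // y ∈ Finset.range (k + 1)} → ℝ)) (a := (0 : ℝ))
      have hF : ∀ j, j ≤ k →
          ∀ ω, F j (fun l : {y // y ∈ Finset.range (k + 1)} => X l ω) = S j ω := by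
        intro j hj ω
        apply Finset.sum_congr rfl
        intro l hl
        rw [Finset.mem_range] at hl
        rw [dif_pos (Finset.mem_range.2 (by omega))]
      set B : Set ({y // y ∈ Finset.range (k + 1)} → ℝ) :=
        {v | F k v ∈ I ∧ ∀ j < k, F j v ∉ I} with hBdef
      have hB : MeasurableSet B := by
        have hrw : B = {v | F k v ∈ I} ∩ ⋂ j, ⋂ _ : j < k, {v | F j v ∈ I}ᶜ := by
          ext v; simp [hBdef]
        rw [hrw]
        exact ((hFmeas k) hI).inter (MeasurableSet.iInter fun j =>
          MeasurableSet.iInter fun _ => ((hFmeas j) hI).compl)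
      have hAB : A k = (fun ω (l : {y // y ∈ Finset.range (k + 1)}) => X l ω) ⁻¹' B := by
        ext ω
        show (S k ω ∈ I ∧ ∀ j < k, S j ω ∉ I)
          ↔ (F k (fun l => X l ω) ∈ I ∧ ∀ j < k, F j (fun l => X l ω) ∉ I)
        rw [hF k le_rfl ω]
        constructor
        · rintro ⟨h1, h2⟩
          exact ⟨h1, fun j hj => by rw [hF j (le_of_lt hj) ω]; exact h2 j hj⟩
        · rintro ⟨h1, h2⟩
          exact ⟨h1, fun j hj => by rw [← hF j (le_of_lt hj) ω]; exact h2 j hj⟩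
      have hmul : ℙ (A k ∩ T ⁻¹' Set.Iio x) = ℙ (A k) * ℙ (T ⁻¹' Set.Iio x) := by
        rw [hAB]
        exact hYT.measure_inter_preimage_eq_mul B (Set.Iio x) hB measurableSet_Iio
      have hTident : ℙ (T ⁻¹' Set.Iio x) = ℙ {ω | S i ω < x} := by
        have harith : i + (k + 1) + 1 - (k + 1) = i + 1 := by omega
        have hre : T = fun ω => ∑ l ∈ Finset.range (i + 1), X ((k + 1) + l) ω := by
          funext ω
          show (∑ l ∈ Finset.Ico (k + 1) (i + (k + 1) + 1), X l ω) = _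
          rw [Finset.sum_Ico_eq_sum_range, harith]
        have hident2 := aux_ident_shift hindep hmeas hident i (k + 1)
        have hmm := hident2.measure_mem_eq (s := Set.Iio x) measurableSet_Iio
        rw [hre]
        exact hmm
      calc f (i + (k + 1)) ≤ ℙ (A k ∩ T ⁻¹' (Set.Iio x)) := measure_mono hsub
        _ = ℙ (A k) * ℙ (T ⁻¹' Set.Iio x) := hmul
        _ = ℙ (A k) * ℙ {ω | S i ω < x} := by rw [hTident]
    have hsplitsum : (∑' n, f n) = (∑ n ∈ Finset.range (k + 1), f n) + ∑' i, f (i + (k + 1)) :=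
      (Summable.sum_add_tsum_nat_add' (f := f) (k := k + 1) ENNReal.summable).symm
    have hhead : (∑ n ∈ Finset.range (k + 1), f n) ≤ ℙ (A k) := by
      rw [Finset.sum_range_succ, Finset.sum_eq_zero hvanish, zero_add]
      exact measure_mono Set.inter_subset_left
    have htailsum : (∑' i, f (i + (k + 1))) ≤ ℙ (A k) * C := by
      calc (∑' i, f (i + (k + 1)))
          ≤ ∑' i, ℙ (A k) * ℙ {ω | S i ω < x} := ENNReal.tsum_le_tsum htail
        _ = ℙ (A k) * C := ENNReal.tsum_mul_left
    calc (∑' n, f n) = _ + _ := hsplitsum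
      _ ≤ ℙ (A k) + ℙ (A k) * C := add_le_add hhead htailsum
      _ = ℙ (A k) * (1 + C) := by rw [mul_add, mul_one]
  calc (∑' n : ℕ, ℙ {ω | S n ω ∈ I})
      = ∑' n, ∑' k, ℙ (A k ∩ {ω | S n ω ∈ I}) := by
        exact tsum_congr hdecomp
    _ = ∑' k, ∑' n, ℙ (A k ∩ {ω | S n ω ∈ I}) := ENNReal.tsum_comm
    _ ≤ ∑' k, ℙ (A k) * (1 + C) := ENNReal.tsum_le_tsum key
    _ = (∑' k, ℙ (A k)) * (1 + C) := ENNReal.tsum_mul_right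
    _ ≤ 1 * (1 + C) := by
        gcongr
        rw [← measure_iUnion hAdisj hAmeas]
        exact prob_le_one
    _ = 1 + C := one_mul _
end

section
/- Let X₁, X₂, ... be i.i.d. nonnegative random variables and suppose there exist a > 0 and p ∈ (0,1) with P(X₁ < a) = p. Then ∑_{m=1}^∞ P(X₁ + ... + X_m < x) ≤ p/(1-p) + x/(a(1-p)) for all x > 0. -/
open MeasureTheory Filter Topology ProbabilityTheory
open scoped NNReal ENNReal

lemma negBinomial_hasSum {x : ℝ} (hx0 : 0 ≤ x) (hx1 : x < 1) :
    ∀ j : ℕ, HasSum (fun n : ℕ => ((n + j).choose j : ℝ) * x ^ n) ((1 - x)⁻¹ ^ (j + 1)) := by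
  intro j
  induction j with
  | zero => simpa using hasSum_geometric_of_lt_one hx0 hx1
  | succ j ih =>
    have hg := hasSum_geometric_of_lt_one hx0 hx1
    have hf' : Summable fun n : ℕ => ‖((n + j).choose j : ℝ) * x ^ n‖ := by
      refine ih.summable.congr fun n => ?_
      rw [Real.norm_of_nonneg (by positivity)]
    have hg' : Summable fun n : ℕ => ‖x ^ n‖ := by
      refine hg.summable.congr fun n => ?_
      rw [Real.norm_of_nonneg (by positivity)]
    have key := hasSum_sum_range_mul_of_summable_norm hf' hg'
    rw [ih.tsum_eq, hg.tsum_eq] at key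
    have : ∀ n : ℕ, (∑ k ∈ Finset.range (n + 1),
        (((k + j).choose j : ℝ) * x ^ k) * x ^ (n - k))
        = ((n + (j + 1)).choose (j + 1) : ℝ) * x ^ n := by
      intro n
      have : ∀ k ∈ Finset.range (n + 1),
          (((k + j).choose j : ℝ) * x ^ k) * x ^ (n - k)
          = ((k + j).choose j : ℝ) * x ^ n := by
        intro k hk
        rw [Finset.mem_range, Nat.lt_succ_iff] at hk
        rw [mul_assoc, ← pow_add, Nat.add_sub_cancel' hk]
      rw [Finset.sum_congr rfl this, ← Finset.sum_mul, ← Nat.cast_sum,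
        Nat.sum_range_add_choose]
      rw [show n + j + 1 = n + (j + 1) by omega]
    rw [funext this] at key
    rw [pow_succ]
    exact key

/-- shift lemma for ENNReal tsum -/
lemma tsum_shift_of_zero {g : ℕ → ℝ≥0∞} :
    ∀ j : ℕ, (∀ n < j, g n = 0) → ∑' n, g n = ∑' k, g (k + j) := by
  intro j
  induction j with
  | zero => simp
  | succ j ih =>
    intro h
    rw [ih (fun n hn => h n (by omega))]
    rw [tsum_eq_zero_add' ENNReal.summable]
    simp only [zero_add]
    rw [h j (by omega), zero_add]
    exact tsum_congr fun k => by rw [show k + 1 + j = k + (j + 1) by omega]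

lemma binom_count_bound {Ω : Type*} [MeasureSpace Ω] [IsProbabilityMeasure (ℙ : Measure Ω)]
    (X : ℕ → Ω → ℝ)
    (hindep : iIndepFun X ℙ)
    (a : ℝ) (q' p' : ℝ≥0∞)
    (hA : ∀ i, ℙ (X i ⁻¹' Set.Ici a) = q') (hAc : ∀ i, ℙ (X i ⁻¹' Set.Iio a) = p')
    (M N : ℕ) :
    ℙ {ω | ((Finset.range M).filter (fun i => a ≤ X i ω)).card < N}
      ≤ ∑ j ∈ Finset.range N, (M.choose j : ℝ≥0∞) * (q' ^ j * p' ^ (M - j)) := by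
  classical
  set A : ℕ → Set Ω := fun i => X i ⁻¹' Set.Ici a with hAdef
  set S : Finset (Finset ℕ) :=
    (Finset.range M).powerset.filter (fun s => s.card < N) with hS
  set F : Finset ℕ → Set Ω :=
    fun s => ⋂ i ∈ Finset.range M, (if i ∈ s then A i else (A i)ᶜ) with hF
  have hsub : {ω | ((Finset.range M).filter (fun i => a ≤ X i ω)).card < N}
      ⊆ ⋃ s ∈ S, F s := by
    intro ω hω
    refine Set.mem_iUnion₂.mpr ⟨(Finset.range M).filter (fun i => a ≤ X i ω), ?_, ?_⟩
    · simp only [hS, Finset.mem_filter, Finset.mem_powerset]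
      exact ⟨Finset.filter_subset _ _, hω⟩
    · simp only [hF, Set.mem_iInter]
      intro i hi
      by_cases h : i ∈ (Finset.range M).filter (fun j => a ≤ X j ω)
      · rw [if_pos h]
        exact (Finset.mem_filter.mp h).2
      · rw [if_neg h]
        intro hc
        exact h (Finset.mem_filter.mpr ⟨hi, hc⟩)
  have hFs : ∀ s ∈ S, ℙ (F s) = q' ^ s.card * p' ^ (M - s.card) := by
    intro s hs
    rw [hS, Finset.mem_filter, Finset.mem_powerset] at hs
    have hprod := hindep.meas_biInter (S := Finset.range M)
      (s := fun i => if i ∈ s then A i else (A i)ᶜ) (fun i _ => ?_)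
    · rw [hF]
      rw [hprod]
      have : ∀ i ∈ Finset.range M,
          ℙ (if i ∈ s then A i else (A i)ᶜ) = if i ∈ s then q' else p' := by
        intro i _
        by_cases h : i ∈ s
        · rw [if_pos h, if_pos h, hA]
        · rw [if_neg h, if_neg h]
          have : (A i)ᶜ = X i ⁻¹' Set.Iio a := by
            rw [hAdef]
            ext ω; simp [not_le]
          rw [this, hAc]
      rw [Finset.prod_congr rfl this, Finset.prod_ite, Finset.prod_const, Finset.prod_const]
      congr 2
      · congr 1
        rw [Finset.filter_mem_eq_inter, Finset.inter_eq_right.mpr hs.1]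
      · rw [show (Finset.range M).filter (fun i => i ∉ s) = Finset.range M \ s by
          ext i; simp [Finset.mem_sdiff]]
        rw [Finset.card_sdiff_of_subset hs.1, Finset.card_range]
    · skip
      by_cases h : i ∈ s
      · rw [if_pos h]
        exact ⟨Set.Ici a, measurableSet_Ici, rfl⟩
      · rw [if_neg h]
        refine ⟨(Set.Ici a)ᶜ, measurableSet_Ici.compl, ?_⟩
        rw [Set.preimage_compl]
  calc ℙ {ω | ((Finset.range M).filter (fun i => a ≤ X i ω)).card < N}
      ≤ ℙ (⋃ s ∈ S, F s) := measure_mono hsub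
    _ ≤ ∑ s ∈ S, ℙ (F s) := measure_biUnion_finset_le _ _
    _ = ∑ s ∈ S, q' ^ s.card * p' ^ (M - s.card) := Finset.sum_congr rfl hFs
    _ = ∑ j ∈ Finset.range N, (M.choose j : ℝ≥0∞) * (q' ^ j * p' ^ (M - j)) := by
        have hSeq : S = (Finset.range N).biUnion
            (fun j => (Finset.range M).powersetCard j) := by
          ext s
          simp only [hS, Finset.mem_filter, Finset.mem_powerset, Finset.mem_biUnion,
            Finset.mem_range, Finset.mem_powersetCard]
          constructor
          · rintro ⟨h1, h2⟩; exact ⟨s.card, h2, h1, rfl⟩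
          · rintro ⟨j, hj, h1, rfl⟩; exact ⟨h1, hj⟩
        rw [hSeq, Finset.sum_biUnion]
        · refine Finset.sum_congr rfl fun j _ => ?_
          have : ∀ s ∈ (Finset.range M).powersetCard j,
              q' ^ s.card * p' ^ (M - s.card) = q' ^ j * p' ^ (M - j) := by
            intro s hs
            rw [(Finset.mem_powersetCard.mp hs).2]
          rw [Finset.sum_congr rfl this, Finset.sum_const, Finset.card_powersetCard,
            Finset.card_range, nsmul_eq_mul]
        · intro j hj k hk hjk
          simp only [Function.onFun]
          rw [Finset.disjoint_left]
          intro s hsj hsk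
          exact hjk (((Finset.mem_powersetCard.mp hsj).2.symm.trans
            (Finset.mem_powersetCard.mp hsk).2).symm ▸ rfl)

theorem renewal_function_bound
    {Ω : Type*} [MeasureSpace Ω] [IsProbabilityMeasure (ℙ : Measure Ω)]
    (X : ℕ → Ω → ℝ)
    (hmeas : ∀ i, Measurable (X i))
    (hnonneg : ∀ i ω, 0 ≤ X i ω)
    (hindep : iIndepFun X ℙ)
    (hident : ∀ i, Measure.map (X i) ℙ = Measure.map (X 0) ℙ)
    (a p : ℝ) (ha : 0 < a) (hp0 : 0 < p) (hp1 : p < 1)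
    (hp : ℙ {ω | X 0 ω < a} = ENNReal.ofReal p) :
    ∀ x : ℝ, 0 < x →
      (∑' m : ℕ, ℙ {ω | (∑ i ∈ Finset.range (m + 1), X i ω) < x})
        ≤ ENNReal.ofReal (p / (1 - p)) + ENNReal.ofReal (x / (a * (1 - p))) := by
  intro x hx
  have hq0 : 0 < 1 - p := by linarith
  set q' := ENNReal.ofReal (1 - p) with hq'
  set p' := ENNReal.ofReal p with hp'
  have hAc : ∀ i, ℙ (X i ⁻¹' Set.Iio a) = p' := by
    intro i
    rw [← Measure.map_apply (hmeas i) measurableSet_Iio, hident i,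
      Measure.map_apply (hmeas 0) measurableSet_Iio]
    exact hp
  have hA : ∀ i, ℙ (X i ⁻¹' Set.Ici a) = q' := by
    intro i
    have hcomp : X i ⁻¹' Set.Ici a = (X i ⁻¹' Set.Iio a)ᶜ := by
      ext ω; simp [not_lt]
    rw [hcomp, prob_compl_eq_one_sub ((hmeas i) measurableSet_Iio), hAc i,
      hq', hp', ENNReal.ofReal_sub 1 hp0.le, ENNReal.ofReal_one]
  set N := Nat.ceil (x / a) with hN
  have hN0 : 0 < N := Nat.ceil_pos.mpr (div_pos hx ha)
  obtain ⟨K, hK⟩ : ∃ K, N = K + 1 := ⟨N - 1, by omega⟩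
  -- pointwise inclusion
  have hincl : ∀ m : ℕ, {ω | (∑ i ∈ Finset.range (m + 1), X i ω) < x}
      ⊆ {ω | ((Finset.range (m + 1)).filter (fun i => a ≤ X i ω)).card < N} := by
    intro m ω hω
    simp only [Set.mem_setOf_eq] at hω ⊢
    by_contra hcard
    push_neg at hcard
    have h1 : x ≤ (N : ℝ) * a := by
      have := Nat.le_ceil (x / a)
      rw [← hN] at this
      exact (div_le_iff₀ ha).mp this
    have h2 : (N : ℝ) * a ≤ (((Finset.range (m + 1)).filter (fun i => a ≤ X i ω)).card : ℝ) * a :=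
      mul_le_mul_of_nonneg_right (Nat.cast_le.mpr hcard) ha.le
    have h3 : (((Finset.range (m + 1)).filter (fun i => a ≤ X i ω)).card : ℝ) * a
        ≤ ∑ i ∈ (Finset.range (m + 1)).filter (fun i => a ≤ X i ω), X i ω := by
      rw [← nsmul_eq_mul, ← Finset.sum_const]
      exact Finset.sum_le_sum fun i hi => (Finset.mem_filter.mp hi).2
    have h4 : ∑ i ∈ (Finset.range (m + 1)).filter (fun i => a ≤ X i ω), X i ω
        ≤ ∑ i ∈ Finset.range (m + 1), X i ω :=
      Finset.sum_le_sum_of_subset_of_nonneg (Finset.filter_subset _ _)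
        (fun i _ _ => hnonneg i ω)
    linarith
  have hmb : ∀ m : ℕ, ℙ {ω | (∑ i ∈ Finset.range (m + 1), X i ω) < x}
      ≤ ∑ j ∈ Finset.range N, (((m + 1)).choose j : ℝ≥0∞) * (q' ^ j * p' ^ (m + 1 - j)) :=
    fun m => (measure_mono (hincl m)).trans
      (binom_count_bound X hindep a q' p' hA hAc (m + 1) N)
  -- series values
  have hW : ∀ j : ℕ, ∑' n : ℕ, ((n + j).choose j : ℝ≥0∞) * p' ^ n
      = ENNReal.ofReal ((1 - p)⁻¹ ^ (j + 1)) := by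
    intro j
    have hs := negBinomial_hasSum hp0.le hp1 j
    rw [← hs.tsum_eq, ENNReal.ofReal_tsum_of_nonneg (fun n => by positivity) hs.summable]
    refine tsum_congr fun n => ?_
    rw [ENNReal.ofReal_mul (by positivity), ENNReal.ofReal_pow hp0.le,
      ENNReal.ofReal_natCast]
  have hWm : ∀ j : ℕ, ∑' n : ℕ, (n.choose j : ℝ≥0∞) * p' ^ (n - j)
      = ENNReal.ofReal ((1 - p)⁻¹ ^ (j + 1)) := by
    intro j
    rw [tsum_shift_of_zero j (fun n hn => by rw [Nat.choose_eq_zero_of_lt hn]; simp),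
      ← hW j]
    exact tsum_congr fun k => by rw [Nat.add_sub_cancel]
  have hsplit : ∀ j : ℕ, ∑' n : ℕ, (n.choose j : ℝ≥0∞) * p' ^ (n - j)
      = ((0 : ℕ).choose j : ℝ≥0∞) * p' ^ (0 - j)
        + ∑' m : ℕ, (((m + 1)).choose j : ℝ≥0∞) * p' ^ (m + 1 - j) := by
    intro j
    exact tsum_eq_zero_add' ENNReal.summable
  -- value of each column
  have hV : ∀ j : ℕ, ∑' m : ℕ, (((m + 1)).choose j : ℝ≥0∞) * (q' ^ j * p' ^ (m + 1 - j))
      = q' ^ j * ∑' m : ℕ, (((m + 1)).choose j : ℝ≥0∞) * p' ^ (m + 1 - j) := by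
    intro j
    rw [← ENNReal.tsum_mul_left]
    exact tsum_congr fun m => by ring
  have hVsucc : ∀ i : ℕ,
      q' ^ (i + 1) * ∑' m : ℕ, (((m + 1)).choose (i + 1) : ℝ≥0∞) * p' ^ (m + 1 - (i + 1))
        = ENNReal.ofReal ((1 - p)⁻¹) := by
    intro i
    have h0 : ∑' m : ℕ, (((m + 1)).choose (i + 1) : ℝ≥0∞) * p' ^ (m + 1 - (i + 1))
        = ENNReal.ofReal ((1 - p)⁻¹ ^ (i + 2)) := by
      have := hsplit (i + 1)
      rw [hWm (i + 1)] at this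
      simpa using this.symm
    rw [h0, hq', ← ENNReal.ofReal_pow hq0.le, ← ENNReal.ofReal_mul (by positivity)]
    congr 1
    rw [pow_succ ((1 - p)⁻¹) (i + 1), ← mul_assoc, ← mul_pow,
      mul_inv_cancel₀ hq0.ne', one_pow, one_mul]
  have hV0 : q' ^ 0 * ∑' m : ℕ, (((m + 1)).choose 0 : ℝ≥0∞) * p' ^ (m + 1 - 0)
      = ENNReal.ofReal (p / (1 - p)) := by
    rw [pow_zero, one_mul]
    have h1 := hsplit 0
    rw [hWm 0] at h1
    simp only [Nat.choose_zero_right, Nat.cast_one, one_mul, pow_zero, Nat.zero_sub] at h1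
    have h2 : (1 - p)⁻¹ ^ (0 + 1) = p / (1 - p) + 1 := by
      rw [zero_add, pow_one, div_add_one hq0.ne', show p + (1 - p) = 1 by ring, one_div]
    rw [h2, ENNReal.ofReal_add (by positivity) zero_le_one, ENNReal.ofReal_one] at h1
    have h3 : (1 : ℝ≥0∞) + ∑' m : ℕ, p' ^ (m + 1 - 0)
        = 1 + ENNReal.ofReal (p / (1 - p)) := by
      rw [← h1, add_comm]
    have := (ENNReal.add_right_inj ENNReal.one_ne_top).mp h3
    simpa using this
  -- assemble
  calc (∑' m : ℕ, ℙ {ω | (∑ i ∈ Finset.range (m + 1), X i ω) < x})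
      ≤ ∑' m : ℕ, ∑ j ∈ Finset.range N,
          (((m + 1)).choose j : ℝ≥0∞) * (q' ^ j * p' ^ (m + 1 - j)) :=
        ENNReal.tsum_le_tsum hmb
    _ = ∑ j ∈ Finset.range N, ∑' m : ℕ,
          (((m + 1)).choose j : ℝ≥0∞) * (q' ^ j * p' ^ (m + 1 - j)) :=
        Summable.tsum_finsetSum fun _ _ => ENNReal.summable
    _ = ∑ j ∈ Finset.range N, q' ^ j
          * ∑' m : ℕ, (((m + 1)).choose j : ℝ≥0∞) * p' ^ (m + 1 - j) :=
        Finset.sum_congr rfl fun j _ => hV j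
    _ = (K : ℝ≥0∞) * ENNReal.ofReal ((1 - p)⁻¹) + ENNReal.ofReal (p / (1 - p)) := by
        rw [hK, Finset.sum_range_succ',
          Finset.sum_congr rfl fun i _ => hVsucc i, Finset.sum_const,
          Finset.card_range, nsmul_eq_mul, hV0]
    _ ≤ ENNReal.ofReal (p / (1 - p)) + ENNReal.ofReal (x / (a * (1 - p))) := by
        rw [add_comm]
        refine add_le_add le_rfl ?_
        have hKle : (K : ℝ) ≤ x / a := by
          have : K < N := by omega
          rw [hN] at this
          exact (Nat.lt_ceil.mp this).le
        rw [← ENNReal.ofReal_natCast, ← ENNReal.ofReal_mul (Nat.cast_nonneg K)]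
        refine ENNReal.ofReal_le_ofReal ?_
        have : x / (a * (1 - p)) = (x / a) * (1 - p)⁻¹ := by
          field_simp
        rw [this]
        exact mul_le_mul_of_nonneg_right hKle (inv_nonneg.mpr hq0.le)
end

section
/- Let M' be a family of uniformly translation bounded positive measures on ℝ^d and ν a finite positive measure. Then there exists a sequence of radii R_k ↗ ∞ such that for every compact K ⊂ ℝ^d, the series ∑_{k=1}^∞ sup_{ω∈M'} (ω restricted to the complement of the centred ball of radius R_k, convolved with ν)(K) is finite. -/
open MeasureTheory Filter Topology
open scoped NNReal ENNReal

theorem summable_tail_convolution_bound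
    (d : ℕ) (M' : Set (Measure (EuclideanSpace ℝ (Fin d))))
    (hM' : ∀ K : Set (EuclideanSpace ℝ (Fin d)), IsCompact K → ∃ C : ℝ≥0,
      ∀ ω ∈ M', ∀ t : EuclideanSpace ℝ (Fin d), ω ((fun x => t + x) '' K) ≤ C)
    (ν : Measure (EuclideanSpace ℝ (Fin d))) [IsFiniteMeasure ν] :
    ∃ R : ℕ → ℝ, StrictMono R ∧ Tendsto R atTop atTop ∧
      ∀ K : Set (EuclideanSpace ℝ (Fin d)), IsCompact K →
        (∑' k : ℕ, ⨆ ω ∈ M',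
          ∫⁻ y, (ω.restrict (Metric.ball (0 : EuclideanSpace ℝ (Fin d)) (R k))ᶜ)
              ((fun x => x + y) ⁻¹' K) ∂ν) < ⊤ := by
  -- the measures of complements of balls tend to 0
  have htend : Tendsto (fun n : ℕ => ν (Metric.ball (0 : EuclideanSpace ℝ (Fin d)) (n : ℝ))ᶜ)
      atTop (𝓝 0) := by
    have h := tendsto_measure_iInter_atTop (μ := ν)
        (s := fun n : ℕ => (Metric.ball (0 : EuclideanSpace ℝ (Fin d)) (n : ℝ))ᶜ)
        (fun n => (Metric.isOpen_ball.measurableSet.compl).nullMeasurableSet)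
        (fun i j hij => Set.compl_subset_compl.mpr
          (Metric.ball_subset_ball (by exact_mod_cast hij)))
        ⟨0, measure_ne_top ν _⟩
    have hempty : (⋂ n : ℕ, (Metric.ball (0 : EuclideanSpace ℝ (Fin d)) (n : ℝ))ᶜ) = ∅ := by
      ext x
      simp only [Set.mem_iInter, Set.mem_compl_iff, Metric.mem_ball, Set.mem_empty_iff_false,
        iff_false, not_forall, not_not]
      obtain ⟨n, hn⟩ := exists_nat_gt (dist x 0)
      exact ⟨n, hn⟩
    rw [hempty, measure_empty] at h
    exact h
  -- choose m k with small tail measure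
  have hm : ∀ k : ℕ, ∃ m : ℕ,
      ν (Metric.ball (0 : EuclideanSpace ℝ (Fin d)) (m : ℝ))ᶜ ≤ (2⁻¹ : ℝ≥0∞) ^ k := by
    intro k
    have hpos : (0 : ℝ≥0∞) < (2⁻¹ : ℝ≥0∞) ^ k := ENNReal.pow_pos (ENNReal.inv_pos.mpr (by norm_num)) _
    obtain ⟨m, hm⟩ := (htend.eventually_lt_const hpos).exists
    exact ⟨m, hm.le⟩
  choose m hmle using hm
  -- define R recursively
  set R : ℕ → ℝ := fun k => Nat.rec ((m 0 : ℝ)) (fun k Rk => max (Rk + 1) ((m (k + 1) : ℝ) + (k + 1))) k with hRdef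
  have hRsucc : ∀ k, R k + 1 ≤ R (k + 1) := fun k => le_max_left _ _
  have hRmono : StrictMono R := strictMono_nat_of_lt_succ fun k => lt_of_lt_of_le (lt_add_one _) (hRsucc k)
  have hRge : ∀ k, (m k : ℝ) + k ≤ R k := by
    intro k
    cases k with
    | zero => simp [hRdef]
    | succ k =>
      push_cast
      exact le_max_right _ _
  have hRbelow : ∀ k, R 0 + k ≤ R k := by
    intro k
    induction k with
    | zero => simp
    | succ k ih =>
      have := hRsucc k
      push_cast
      linarith
  have hRtend : Tendsto R atTop atTop := by
    apply tendsto_atTop_mono hRbelow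
    apply tendsto_atTop_add_const_left
    exact tendsto_natCast_atTop_atTop
  refine ⟨R, hRmono, hRtend, ?_⟩
  intro K hK
  obtain ⟨C, hC⟩ := hM' K hK
  obtain ⟨r, hr⟩ := hK.isBounded.subset_ball (0 : EuclideanSpace ℝ (Fin d))
  set ρ : ℕ := ⌈r⌉₊ with hρdef
  have hKρ : K ⊆ Metric.ball 0 (ρ : ℝ) := hr.trans (Metric.ball_subset_ball (Nat.le_ceil r))
  -- pointwise bound on integrand
  have hpt : ∀ k : ℕ, ∀ ω ∈ M', ∀ y : EuclideanSpace ℝ (Fin d),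
      (ω.restrict (Metric.ball (0 : EuclideanSpace ℝ (Fin d)) (R k))ᶜ)
        ((fun x => x + y) ⁻¹' K)
      ≤ Set.indicator (Metric.ball (0 : EuclideanSpace ℝ (Fin d)) (R k - ρ))ᶜ
          (fun _ => (C : ℝ≥0∞)) y := by
    intro k ω hω y
    by_cases hy : y ∈ (Metric.ball (0 : EuclideanSpace ℝ (Fin d)) (R k - ρ))ᶜ
    · rw [Set.indicator_of_mem hy]
      have himg : (fun x => x + y) ⁻¹' K = (fun x => (-y) + x) '' K := by
        ext x
        simp only [Set.mem_preimage, Set.mem_image]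
        constructor
        · intro h; exact ⟨x + y, h, by abel⟩
        · rintro ⟨a, ha, rfl⟩; simpa [add_assoc] using ha
      calc (ω.restrict (Metric.ball (0 : EuclideanSpace ℝ (Fin d)) (R k))ᶜ)
            ((fun x => x + y) ⁻¹' K)
          ≤ ω ((fun x => x + y) ⁻¹' K) := Measure.restrict_le_self _
        _ = ω ((fun x => (-y) + x) '' K) := by rw [himg]
        _ ≤ C := hC ω hω (-y)
    · rw [Set.indicator_of_notMem hy]
      simp only [Set.notMem_compl_iff, Metric.mem_ball, dist_zero_right] at hy
      rw [Measure.restrict_apply' Metric.isOpen_ball.measurableSet.compl]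
      have : ((fun x => x + y) ⁻¹' K) ∩ (Metric.ball (0 : EuclideanSpace ℝ (Fin d)) (R k))ᶜ
          = ∅ := by
        ext x
        simp only [Set.mem_inter_iff, Set.mem_preimage, Set.mem_compl_iff, Metric.mem_ball,
          dist_zero_right, Set.mem_empty_iff_false, iff_false, not_and, not_not]
        intro hxK
        have hxy : ‖x + y‖ < (ρ : ℝ) := by
          have := hKρ hxK
          simpa [Metric.mem_ball, dist_zero_right] using this
        calc ‖x‖ = ‖(x + y) + (-y)‖ := by congr 1; abel
          _ ≤ ‖x + y‖ + ‖-y‖ := norm_add_le _ _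
          _ = ‖x + y‖ + ‖y‖ := by rw [norm_neg]
          _ < ρ + (R k - ρ) := by
              have h1 : ‖y‖ < R k - ρ := hy
              linarith
          _ = R k := by ring
      rw [this, measure_empty]
  -- integrate the pointwise bound
  have hterm : ∀ k : ℕ,
      (⨆ ω ∈ M', ∫⁻ y, (ω.restrict (Metric.ball (0 : EuclideanSpace ℝ (Fin d)) (R k))ᶜ)
          ((fun x => x + y) ⁻¹' K) ∂ν)
      ≤ (C : ℝ≥0∞) * ν (Metric.ball (0 : EuclideanSpace ℝ (Fin d)) (R k - ρ))ᶜ := by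
    intro k
    refine iSup₂_le fun ω hω => ?_
    calc ∫⁻ y, (ω.restrict (Metric.ball (0 : EuclideanSpace ℝ (Fin d)) (R k))ᶜ)
          ((fun x => x + y) ⁻¹' K) ∂ν
        ≤ ∫⁻ y, Set.indicator (Metric.ball (0 : EuclideanSpace ℝ (Fin d)) (R k - ρ))ᶜ
            (fun _ => (C : ℝ≥0∞)) y ∂ν := lintegral_mono (hpt k ω hω)
      _ = (C : ℝ≥0∞) * ν (Metric.ball (0 : EuclideanSpace ℝ (Fin d)) (R k - ρ))ᶜ := by
          rw [lintegral_indicator Metric.isOpen_ball.measurableSet.compl]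
          simp [mul_comm]
  -- the final geometric bound
  have hbound : ∀ k : ℕ,
      (C : ℝ≥0∞) * ν (Metric.ball (0 : EuclideanSpace ℝ (Fin d)) (R k - ρ))ᶜ
      ≤ (C : ℝ≥0∞) * (ν Set.univ + 1) * 2 ^ ρ * (2⁻¹ : ℝ≥0∞) ^ k := by
    intro k
    by_cases hk : (ρ : ℕ) ≤ k
    · have hsub : (Metric.ball (0 : EuclideanSpace ℝ (Fin d)) (R k - ρ))ᶜ
          ⊆ (Metric.ball (0 : EuclideanSpace ℝ (Fin d)) ((m k : ℝ)))ᶜ := by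
        apply Set.compl_subset_compl.mpr
        apply Metric.ball_subset_ball
        have h1 := hRge k
        have h2 : (ρ : ℝ) ≤ (k : ℝ) := by exact_mod_cast hk
        linarith
      have h1 : ν (Metric.ball (0 : EuclideanSpace ℝ (Fin d)) (R k - ρ))ᶜ
          ≤ (2⁻¹ : ℝ≥0∞) ^ k := le_trans (measure_mono hsub) (hmle k)
      calc (C : ℝ≥0∞) * ν (Metric.ball (0 : EuclideanSpace ℝ (Fin d)) (R k - ρ))ᶜ
          ≤ (C : ℝ≥0∞) * (2⁻¹ : ℝ≥0∞) ^ k := by gcongr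
        _ = (C : ℝ≥0∞) * 1 * 1 * (2⁻¹ : ℝ≥0∞) ^ k := by ring
        _ ≤ (C : ℝ≥0∞) * (ν Set.univ + 1) * 2 ^ ρ * (2⁻¹ : ℝ≥0∞) ^ k := by
            gcongr
            · exact le_add_self
            · exact one_le_pow_of_one_le' one_le_two _
    · push_neg at hk
      have h2 : (1 : ℝ≥0∞) ≤ 2 ^ ρ * (2⁻¹ : ℝ≥0∞) ^ k := by
        have : (2 : ℝ≥0∞) ^ ρ * (2⁻¹ : ℝ≥0∞) ^ k
            = 2 ^ (ρ - k) * (2 ^ k * (2⁻¹ : ℝ≥0∞) ^ k) := by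
          rw [← mul_assoc, ← pow_add]
          congr 2
          omega
        rw [this, ← mul_pow, ENNReal.mul_inv_cancel (by norm_num) (by norm_num), one_pow,
          mul_one]
        exact one_le_pow_of_one_le' one_le_two _
      calc (C : ℝ≥0∞) * ν (Metric.ball (0 : EuclideanSpace ℝ (Fin d)) (R k - ρ))ᶜ
          ≤ (C : ℝ≥0∞) * (ν Set.univ + 1) := by
            gcongr
            exact le_trans (measure_mono (Set.subset_univ _)) (self_le_add_right _ _)
        _ = (C : ℝ≥0∞) * (ν Set.univ + 1) * 1 := (mul_one _).symm
        _ ≤ (C : ℝ≥0∞) * (ν Set.univ + 1) * (2 ^ ρ * (2⁻¹ : ℝ≥0∞) ^ k) := by gcongr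
        _ = (C : ℝ≥0∞) * (ν Set.univ + 1) * 2 ^ ρ * (2⁻¹ : ℝ≥0∞) ^ k := by ring
  -- sum up
  calc (∑' k : ℕ, ⨆ ω ∈ M',
          ∫⁻ y, (ω.restrict (Metric.ball (0 : EuclideanSpace ℝ (Fin d)) (R k))ᶜ)
              ((fun x => x + y) ⁻¹' K) ∂ν)
      ≤ ∑' k : ℕ, (C : ℝ≥0∞) * (ν Set.univ + 1) * 2 ^ ρ * (2⁻¹ : ℝ≥0∞) ^ k :=
        ENNReal.tsum_le_tsum fun k => le_trans (hterm k) (hbound k)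
    _ = (C : ℝ≥0∞) * (ν Set.univ + 1) * 2 ^ ρ * ∑' k : ℕ, (2⁻¹ : ℝ≥0∞) ^ k :=
        ENNReal.tsum_mul_left
    _ < ⊤ := by
        rw [ENNReal.tsum_geometric]
        refine ENNReal.mul_lt_top (ENNReal.mul_lt_top (ENNReal.mul_lt_top ?_ ?_) ?_) ?_
        · exact ENNReal.coe_lt_top
        · exact ENNReal.add_lt_top.mpr ⟨measure_lt_top ν _, ENNReal.one_lt_top⟩
        · exact ENNReal.pow_lt_top (by norm_num)
        · rw [show (1 : ℝ≥0∞) - 2⁻¹ = 2⁻¹ by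
            rw [ENNReal.sub_eq_of_eq_add (by norm_num)]
            rw [ENNReal.inv_two_add_inv_two]]
          simp
end
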